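/- arXiv:2405.09490 — 3 statements merged into one kernel-verified Lean document; each statement's English description precedes it below -/
import Mathlib

section
/- Let H be a real Hilbert space, P : H → H a linear isometry with P² = I, K ⊆ H a nonempty closed convex cone satisfying P(K) ⊆ K, and let K° be the polar cone of K. Define M = {λ ∈ K° : λ = Pλ}. Then for every y ∈ H, the metric projection of y onto M is given by P_M y = (1/2) · P_{K°}((I + P) y). -/
open scoped RealInnerProductSpace

/-- Let `P` be a self-adjoint continuous linear involution of a real Hilbert
space `H` (hence a linear isometry with `P² = I`), `K` a nonempty closed convex
cone with `P(K) ⊆ K`, `K°` its polar cone, and `M = {λ ∈ K° : λ = Pλ}`. Then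
the metric projection onto `M` satisfies `P_M y = (1/2) • P_{K°}((I + P) y)`. -/
theorem projection_onto_M
    {H : Type*} [NormedAddCommGroup H] [InnerProductSpace ℝ H] [CompleteSpace H]
    (P : H →L[ℝ] H) (hPinv : ∀ x : H, P (P x) = x)
    (hPsa : ∀ x y : H, ⟪P x, y⟫ = ⟪x, P y⟫)
    (K : Set H) (hKne : K.Nonempty) (hKcl : IsClosed K) (hKconv : Convex ℝ K)
    (hKcone : ∀ c : ℝ, 0 < c → ∀ x ∈ K, c • x ∈ K)
    (hPK : ∀ x ∈ K, P x ∈ K)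
    (Kp : Set H) (hKp : Kp = {y : H | ∀ z ∈ K, ⟪y, z⟫ ≤ 0})
    (M : Set H) (hM : M = {lam ∈ Kp | P lam = lam})
    (PM PKp : H → H)
    (hPM : ∀ x : H, PM x ∈ M ∧ ∀ y ∈ M, ‖x - PM x‖ ≤ ‖x - y‖)
    (hPKp : ∀ x : H, PKp x ∈ Kp ∧ ∀ y ∈ Kp, ‖x - PKp x‖ ≤ ‖x - y‖) :
    ∀ y : H, PM y = (1 / 2 : ℝ) • PKp (y + P y) := by
  -- norm preservation
  have hnormP : ∀ x : H, ‖P x‖ = ‖x‖ := by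
    intro x
    have h : ⟪P x, P x⟫ = ⟪x, x⟫ := by rw [hPsa, hPinv]
    rw [@norm_eq_sqrt_re_inner ℝ, @norm_eq_sqrt_re_inner ℝ H _ _ _ x, h]
  -- convexity of Kp
  have hKpconv : Convex ℝ Kp := by
    intro a ha b hb s t hs ht hst
    rw [hKp] at ha hb ⊢
    intro z hz
    have h1 := ha z hz
    have h2 := hb z hz
    have h3 : ⟪s • a + t • b, z⟫ = s * ⟪a, z⟫ + t * ⟪b, z⟫ := by
      rw [inner_add_left, real_inner_smul_left, real_inner_smul_left]
    rw [h3]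
    nlinarith
  -- convexity of M
  have hMconv : Convex ℝ M := by
    intro a ha b hb s t hs ht hst
    rw [hM] at ha hb ⊢
    refine ⟨hKpconv ha.1 hb.1 hs ht hst, ?_⟩
    simp only [map_add, map_smul, ha.2, hb.2]
  -- variational inequality from minimization
  have VI : ∀ (S : Set H), Convex ℝ S → ∀ (x v : H), v ∈ S →
      (∀ z ∈ S, ‖x - v‖ ≤ ‖x - z‖) → ∀ z ∈ S, ⟪x - v, z - v⟫ ≤ 0 := by
    intro S hS x v hv hmin
    refine (norm_eq_iInf_iff_real_inner_le_zero hS hv).mp ?_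
    haveI : Nonempty S := ⟨⟨v, hv⟩⟩
    refine le_antisymm ?_ (ciInf_le (f := fun z : S => ‖x - (z : H)‖) ⟨0, fun _ ⟨_, h⟩ => h ▸ norm_nonneg _⟩ ⟨v, hv⟩)
    exact le_ciInf fun z => hmin z z.2
  intro y
  set w := y + P y with hw
  have hPw : P w = w := by
    simp only [hw, map_add, hPinv]
    abel
  set q := PKp w with hqdef
  obtain ⟨hq, hqmin⟩ := hPKp w
  have VIq : ∀ z ∈ Kp, ⟪w - q, z - q⟫ ≤ 0 := VI Kp hKpconv w q hq hqmin
  -- P maps Kp into Kp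
  have hPKp' : ∀ lam ∈ Kp, P lam ∈ Kp := by
    intro lam hlam
    rw [hKp] at hlam ⊢
    intro z hz
    rw [hPsa]
    exact hlam _ (hPK z hz)
  -- P q = q
  have hPq : P q = q := by
    have hPqKp : P q ∈ Kp := hPKp' q hq
    have hPqmin : ∀ z ∈ Kp, ‖w - P q‖ ≤ ‖w - z‖ := by
      intro z hz
      have e1 : ‖w - P q‖ = ‖w - q‖ := by
        rw [show w - P q = P (w - q) by rw [map_sub, hPw]]
        exact hnormP _
      have e2 : ‖w - P z‖ = ‖w - z‖ := by
        rw [show w - z = P (w - P z) by rw [map_sub, hPw, hPinv]]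
        exact (hnormP _).symm
      rw [e1, ← e2]
      exact hqmin _ (hPKp' z hz)
    have h1 := VI Kp hKpconv w (P q) hPqKp hPqmin q hq
    have h2 := VIq (P q) hPqKp
    have : ⟪P q - q, P q - q⟫ ≤ 0 := by
      have e : ⟪P q - q, P q - q⟫ = ⟪w - q, P q - q⟫ + ⟪w - P q, q - P q⟫ := by
        rw [← inner_neg_neg (𝕜 := ℝ) (w - P q)]
        rw [show -(w - P q) = P q - w by abel, show -(q - P q) = P q - q by abel]
        rw [← inner_add_left]
        congr 1
        abel
      rw [e]; linarith
    have := real_inner_self_nonpos.mp this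
    have : P q = q := by rwa [sub_eq_zero] at this
    exact this
  -- orthogonality: ⟪w - q, q⟫ = 0
  have horth : ⟪w - q, q⟫ = 0 := by
    have h0 : (0 : H) ∈ Kp := by
      rw [hKp]; intro z hz; rw [inner_zero_left]
    have hqq : q + q ∈ Kp := by
      rw [hKp] at hq ⊢
      intro z hz
      have := hq z hz
      rw [inner_add_left]; linarith
    have h1 := VIq 0 h0
    have h2 := VIq (q + q) hqq
    rw [zero_sub, inner_neg_right] at h1
    rw [add_sub_cancel_right] at h2
    linarith
  -- cone property: ⟪w - q, z⟫ ≤ 0 for z ∈ Kp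
  have hcone : ∀ z ∈ Kp, ⟪w - q, z⟫ ≤ 0 := by
    intro z hz
    have := VIq z hz
    rw [inner_sub_right] at this
    linarith
  -- m := (1/2) • q ∈ M
  set m := (1 / 2 : ℝ) • q with hmdef
  have hmM : m ∈ M := by
    rw [hM]
    constructor
    · rw [hKp] at hq ⊢
      intro z hz
      have := hq z hz
      rw [hmdef, real_inner_smul_left]
      linarith
    · rw [hmdef, map_smul, hPq]
  -- variational inequality for m w.r.t. y over M
  have hVIm : ∀ z ∈ M, ⟪y - m, z - m⟫ ≤ 0 := by
    intro z hz
    rw [hM] at hz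
    obtain ⟨hzKp, hzP⟩ := hz
    have hyz : ⟪P y, z⟫ = ⟪y, z⟫ := by rw [hPsa, hzP]
    have hyq : ⟪P y, q⟫ = ⟪y, q⟫ := by rw [hPsa, hPq]
    have hc2 : ⟪y, z⟫ + ⟪y, z⟫ - ⟪q, z⟫ ≤ 0 := by
      have hc := hcone z hzKp
      rw [inner_sub_left, hw, inner_add_left, hyz] at hc
      linarith
    have ho2 : ⟪y, q⟫ + ⟪y, q⟫ - ⟪q, q⟫ = 0 := by
      have ho := horth
      rw [inner_sub_left, hw, inner_add_left, hyq] at ho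
      linarith
    simp only [hmdef, inner_sub_left, inner_sub_right, real_inner_smul_left,
      real_inner_smul_right]
    have hqy : ⟪q, y⟫ = ⟪y, q⟫ := real_inner_comm y q
    linarith
  -- conclude PM y = m
  obtain ⟨hpM, hpmin⟩ := hPM y
  have hVIp : ∀ z ∈ M, ⟪y - PM y, z - PM y⟫ ≤ 0 := VI M hMconv y (PM y) hpM hpmin
  have h1 := hVIm (PM y) hpM
  have h2 := hVIp m hmM
  have key : ⟪PM y - m, PM y - m⟫ ≤ 0 := by
    have e : ⟪PM y - m, PM y - m⟫ = ⟪y - m, PM y - m⟫ + ⟪y - PM y, m - PM y⟫ := by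
      rw [← inner_neg_neg (𝕜 := ℝ) (y - PM y)]
      rw [show -(y - PM y) = PM y - y by abel, show -(m - PM y) = PM y - m by abel]
      rw [← inner_add_left]
      congr 1
      abel
    rw [e]; linarith
  have := real_inner_self_nonpos.mp key
  rw [sub_eq_zero] at this
  exact this
end

section
/- Let T₁, T₂ : H → 2^H be maximally monotone operators on a real Hilbert space, c > 0, and suppose T₁ is uniformly monotone with modulus φ and the composition T = R_{cT₂} ∘ R_{cT₁} has a fixed point z*. For the Peaceman–Rachford iteration x^{(k)} = J_{cT₁} z^{(k)}, z^{(k+1)} = (R_{cT₂} ∘ R_{cT₁}) z^{(k)}, started from any z^{(0)}, one has for every k: ‖z^{(k+1)} − z*‖² ≤ ‖z^{(k)} − z*‖² − 4c · φ(‖x^{(k)} − x*‖), where x* = J_{cT₁} z*; consequently φ(‖x^{(k)} − x*‖) → 0 and x^{(k)} → x* strongly. -/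
open scoped RealInnerProductSpace

/-- Key Hilbert-space identity for the reflected resolvent. -/
lemma pr_key_identity {H : Type*} [NormedAddCommGroup H] [InnerProductSpace ℝ H]
    (c : ℝ) (z w jz jw u v : H) (hz : z = jz + c • u) (hw : w = jw + c • v) :
    ‖((2:ℝ) • jz - z) - ((2:ℝ) • jw - w)‖ ^ 2
      = ‖z - w‖ ^ 2 - 4 * c * ⟪u - v, jz - jw⟫ := by
  have h1 : ((2:ℝ) • jz - z) - ((2:ℝ) • jw - w) = (jz - jw) - c • (u - v) := by
    rw [hz, hw]; module
  have h2 : z - w = (jz - jw) + c • (u - v) := by rw [hz, hw]; module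
  rw [h1, h2, norm_sub_sq_real, norm_add_sq_real, real_inner_smul_right,
    real_inner_comm (jz - jw) (u - v)]
  ring

/-- Peaceman–Rachford splitting: if `T₁, T₂` are maximally monotone, `c > 0`,
`T₁` is uniformly monotone with modulus `φ`, and `z*` is a fixed point of
`R_{cT₂} ∘ R_{cT₁}` (where `J_i` is the resolvent of `c T_i` and
`R_i = 2 J_i - I`), then the iteration `x⁽ᵏ⁾ = J₁ z⁽ᵏ⁾`,
`z⁽ᵏ⁺¹⁾ = (R₂ ∘ R₁) z⁽ᵏ⁾` satisfies
`‖z⁽ᵏ⁺¹⁾ − z*‖² ≤ ‖z⁽ᵏ⁾ − z*‖² − 4c·φ(‖x⁽ᵏ⁾ − x*‖)` with `x* = J₁ z*`, hence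
`φ(‖x⁽ᵏ⁾ − x*‖) → 0` and `x⁽ᵏ⁾ → x*` strongly. -/
theorem peaceman_rachford_convergence
    {H : Type*} [NormedAddCommGroup H] [InnerProductSpace ℝ H]
    (T₁ T₂ : H → Set H)
    (hmono₁ : ∀ x y u v : H, u ∈ T₁ x → v ∈ T₁ y → 0 ≤ ⟪u - v, x - y⟫)
    (hmax₁ : ∀ x u : H, (∀ y v : H, v ∈ T₁ y → 0 ≤ ⟪u - v, x - y⟫) → u ∈ T₁ x)
    (hmono₂ : ∀ x y u v : H, u ∈ T₂ x → v ∈ T₂ y → 0 ≤ ⟪u - v, x - y⟫)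
    (hmax₂ : ∀ x u : H, (∀ y v : H, v ∈ T₂ y → 0 ≤ ⟪u - v, x - y⟫) → u ∈ T₂ x)
    (c : ℝ) (hc : 0 < c)
    (φ : ℝ → ℝ)
    (hφmono : MonotoneOn φ (Set.Ici (0 : ℝ)))
    (hφnonneg : ∀ t : ℝ, 0 ≤ t → 0 ≤ φ t)
    (hφzero : ∀ t : ℝ, 0 ≤ t → (φ t = 0 ↔ t = 0))
    (hunif : ∀ x y u v : H, u ∈ T₁ x → v ∈ T₁ y → φ ‖x - y‖ ≤ ⟪u - v, x - y⟫)
    (J₁ J₂ : H → H)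
    (hJ₁ : ∀ z : H, ∃ u ∈ T₁ (J₁ z), z = J₁ z + c • u)
    (hJ₂ : ∀ z : H, ∃ u ∈ T₂ (J₂ z), z = J₂ z + c • u)
    (R₁ R₂ : H → H)
    (hR₁ : ∀ z : H, R₁ z = (2 : ℝ) • J₁ z - z)
    (hR₂ : ∀ z : H, R₂ z = (2 : ℝ) • J₂ z - z)
    (zstar : H) (hfix : R₂ (R₁ zstar) = zstar)
    (z : ℕ → H) (x : ℕ → H) (xstar : H)
    (hz : ∀ k : ℕ, z (k + 1) = R₂ (R₁ (z k)))
    (hx : ∀ k : ℕ, x k = J₁ (z k)) (hxstar : xstar = J₁ zstar) :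
    (∀ k : ℕ, ‖z (k + 1) - zstar‖ ^ 2
        ≤ ‖z k - zstar‖ ^ 2 - 4 * c * φ ‖x k - xstar‖) ∧
    Filter.Tendsto (fun k => φ ‖x k - xstar‖) Filter.atTop (nhds 0) ∧
    Filter.Tendsto x Filter.atTop (nhds xstar) := by
  -- R₂ is nonexpansive
  have hR₂ne : ∀ a b : H, ‖R₂ a - R₂ b‖ ^ 2 ≤ ‖a - b‖ ^ 2 := by
    intro a b
    obtain ⟨u, hu, hau⟩ := hJ₂ a
    obtain ⟨v, hv, hbv⟩ := hJ₂ b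
    have := pr_key_identity c a b (J₂ a) (J₂ b) u v hau hbv
    rw [hR₂ a, hR₂ b, this]
    have h0 := hmono₂ (J₂ a) (J₂ b) u v hu hv
    nlinarith [hc]
  -- R₁ contracts by the uniform monotonicity modulus
  have hR₁c : ∀ a b : H,
      ‖R₁ a - R₁ b‖ ^ 2 ≤ ‖a - b‖ ^ 2 - 4 * c * φ ‖J₁ a - J₁ b‖ := by
    intro a b
    obtain ⟨u, hu, hau⟩ := hJ₁ a
    obtain ⟨v, hv, hbv⟩ := hJ₁ b
    have := pr_key_identity c a b (J₁ a) (J₁ b) u v hau hbv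
    rw [hR₁ a, hR₁ b, this]
    have h0 := hunif (J₁ a) (J₁ b) u v hu hv
    nlinarith [hc]
  -- main per-step inequality
  have hmain : ∀ k : ℕ, ‖z (k + 1) - zstar‖ ^ 2
      ≤ ‖z k - zstar‖ ^ 2 - 4 * c * φ ‖x k - xstar‖ := by
    intro k
    have h1 : ‖z (k + 1) - zstar‖ ^ 2 ≤ ‖R₁ (z k) - R₁ zstar‖ ^ 2 := by
      have h0 := hR₂ne (R₁ (z k)) (R₁ zstar)
      rw [hfix] at h0
      rw [hz k]; exact h0
    have h2 := hR₁c (z k) zstar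
    rw [← hx k, ← hxstar] at h2
    linarith
  refine ⟨hmain, ?_⟩
  -- φ-values are nonnegative
  have hφk : ∀ k : ℕ, 0 ≤ φ ‖x k - xstar‖ := fun k => hφnonneg _ (norm_nonneg _)
  -- summability via telescoping
  have htel : ∀ n : ℕ, ∑ k ∈ Finset.range n, (4 * c * φ ‖x k - xstar‖)
      ≤ ‖z 0 - zstar‖ ^ 2 - ‖z n - zstar‖ ^ 2 := by
    intro n
    induction n with
    | zero => simp
    | succ n ih =>
      rw [Finset.sum_range_succ]
      have := hmain n
      linarith
  have hsum : Summable (fun k => φ ‖x k - xstar‖) := by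
    have h4c : (0:ℝ) < 4 * c := by linarith
    have : Summable (fun k => 4 * c * φ ‖x k - xstar‖) := by
      apply summable_of_sum_range_le (c := ‖z 0 - zstar‖ ^ 2)
      · intro k; exact mul_nonneg (by linarith) (hφk k)
      · intro n
        have := htel n
        nlinarith [sq_nonneg ‖z n - zstar‖]
    have := this.div_const (4 * c)
    convert this using 2 with k
    case e'_3 => rfl
    rw [mul_div_cancel_left₀ _ h4c.ne']
  have hφtend : Filter.Tendsto (fun k => φ ‖x k - xstar‖) Filter.atTop (nhds 0) :=
    hsum.tendsto_atTop_zero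
  refine ⟨hφtend, ?_⟩
  -- x → x*
  rw [Metric.tendsto_atTop]
  intro ε hε
  have hφε : 0 < φ ε := by
    rcases lt_or_eq_of_le (hφnonneg ε hε.le) with h | h
    · exact h
    · exfalso
      have := (hφzero ε hε.le).mp h.symm
      linarith
  have := (Metric.tendsto_atTop.mp hφtend) (φ ε) hφε
  obtain ⟨N, hN⟩ := this
  refine ⟨N, fun k hk => ?_⟩
  have h1 := hN k hk
  rw [Real.dist_eq, sub_zero, abs_of_nonneg (hφk k)] at h1
  by_contra hcon
  push_neg at hcon
  rw [dist_eq_norm] at hcon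
  have : φ ε ≤ φ ‖x k - xstar‖ := hφmono (Set.mem_Ici.mpr hε.le)
    (Set.mem_Ici.mpr (norm_nonneg _)) hcon
  linarith
end

section
/- Let f ∈ Γ₀(H), let C : H → G be continuous linear, d ∈ G, c > 0, and z ∈ G. Suppose u minimizes x ↦ f(x) + ⟨z, Cx⟩ + (c/2)‖Cx − d‖² over H. Then λ = z + c(Cu − d) satisfies z − λ ∈ c T₁λ, i.e., λ = J_{cT₁} z, where T₁λ = −C ∂f*(−C*λ) + d. In particular the resolvent of T₁ at z can be evaluated via this primal minimization. -/
set_option maxHeartbeats 1000000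


open scoped RealInnerProductSpace

/-- The Fenchel conjugate of an extended-real-valued function on a real
inner-product space: `f*(y) = sup_x (⟪y, x⟫ − f(x))`. -/
noncomputable def fenchelConjugate {H : Type*} [NormedAddCommGroup H]
    [InnerProductSpace ℝ H] (f : H → EReal) : H → EReal :=
  fun y => ⨆ x : H, (((⟪y, x⟫ : ℝ) : EReal) - f x)

/-- The subdifferential of an extended-real-valued function. -/
def subdiff {H : Type*} [NormedAddCommGroup H] [InnerProductSpace ℝ H]
    (g : H → EReal) (x : H) : Set H :=
  {u : H | ∀ y : H, g x + ((⟪u, y - x⟫ : ℝ) : EReal) ≤ g y}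

/-- If `p` is a subgradient of `f` at `u` (with `f u` finite and `f` nowhere `⊥`),
then the Fenchel conjugate attains the value `⟪p,u⟫ - f u` at `p`. -/
lemma conj_eq_of_subgradient {H : Type*} [NormedAddCommGroup H]
    [InnerProductSpace ℝ H] (f : H → EReal) (hbot : ∀ x : H, f x ≠ ⊥)
    (u p : H) (r : ℝ) (hr : f u = (r : EReal))
    (h : ∀ y : H, f u + ((⟪p, y - u⟫ : ℝ) : EReal) ≤ f y) :
    fenchelConjugate f p = ((⟪p, u⟫ - r : ℝ) : EReal) := by
  apply le_antisymm
  · refine iSup_le fun x => ?_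
    by_cases hx : f x = ⊤
    · simp [hx]
    · obtain ⟨s, hs⟩ : ∃ s : ℝ, f x = s := by
        lift f x to ℝ using ⟨hx, hbot x⟩ with s; exact ⟨s, rfl⟩
      have h1 := h x
      rw [hr, hs] at h1
      rw [hs]
      norm_cast at h1 ⊢
      have hin : ⟪p, x - u⟫ = ⟪p, x⟫ - ⟪p, u⟫ := by rw [inner_sub_right]
      linarith [hin ▸ h1]
  · refine le_iSup_of_le u ?_
    rw [hr]
    norm_cast

/-- Subgradient inversion: `p ∈ ∂f(u)` implies `u ∈ ∂f*(p)`. -/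
lemma mem_subdiff_conj {H : Type*} [NormedAddCommGroup H]
    [InnerProductSpace ℝ H] (f : H → EReal) (hbot : ∀ x : H, f x ≠ ⊥)
    (u p : H) (r : ℝ) (hr : f u = (r : EReal))
    (h : ∀ y : H, f u + ((⟪p, y - u⟫ : ℝ) : EReal) ≤ f y) :
    u ∈ subdiff (fenchelConjugate f) p := by
  intro q
  rw [conj_eq_of_subgradient f hbot u p r hr h]
  have hq : (((⟪q, u⟫ - r : ℝ)) : EReal) ≤ fenchelConjugate f q := by
    refine le_iSup_of_le u ?_
    rw [hr]; norm_cast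
  refine le_trans (le_of_eq ?_) hq
  norm_cast
  have h1 : ⟪u, q - p⟫ = ⟪u, q⟫ - ⟪u, p⟫ := by rw [inner_sub_right]
  rw [h1, real_inner_comm u q, real_inner_comm u p]
  ring

/-- Resolvent of `T₁λ = −C∂f*(−C*λ) + d` via primal minimization: if `u`
minimizes `x ↦ f(x) + ⟪z, Cx⟫ + (c/2)‖Cx − d‖²`, then `λ = z + c(Cu − d)`
satisfies `z − λ ∈ cT₁λ`, i.e. `λ = J_{cT₁} z`. -/
theorem resolvent_via_primal_minimization
    {H G : Type*} [NormedAddCommGroup H] [InnerProductSpace ℝ H] [CompleteSpace H]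
    [NormedAddCommGroup G] [InnerProductSpace ℝ G] [CompleteSpace G]
    (f : H → EReal)
    (hproper_top : ∃ x : H, f x ≠ ⊤) (hproper_bot : ∀ x : H, f x ≠ ⊥)
    (hconv : ∀ x y : H, ∀ a b : ℝ, 0 ≤ a → 0 ≤ b → a + b = 1 →
      f (a • x + b • y) ≤ (a : EReal) * f x + (b : EReal) * f y)
    (hlsc : LowerSemicontinuous f)
    (C : H →L[ℝ] G) (d : G) (c : ℝ) (hc : 0 < c) (z : G)
    (u : H)
    (hmin : ∀ x : H,
      f u + ((⟪z, C u⟫ + c / 2 * ‖C u - d‖ ^ 2 : ℝ) : EReal) ≤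
      f x + ((⟪z, C x⟫ + c / 2 * ‖C x - d‖ ^ 2 : ℝ) : EReal))
    (lam : G) (hlam : lam = z + c • (C u - d)) :
    ∃ p ∈ subdiff (fenchelConjugate f) (-(ContinuousLinearMap.adjoint C lam)),
      z - lam = c • (-(C p) + d) := by
  have hp₀ : True := trivial
  -- f u is finite
  obtain ⟨x₀, hx₀⟩ := hproper_top
  have hfu_top : f u ≠ ⊤ := by
    intro htop
    have h1 := hmin x₀
    rw [htop] at h1
    have h2 : (⊤ : EReal) + ((⟪z, C u⟫ + c / 2 * ‖C u - d‖ ^ 2 : ℝ) : EReal) = ⊤ := by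
      rw [EReal.top_add_of_ne_bot]; exact EReal.coe_ne_bot _
    rw [h2, top_le_iff] at h1
    obtain ⟨s, hs⟩ : ∃ s : ℝ, f x₀ = s := by
      lift f x₀ to ℝ using ⟨hx₀, hproper_bot x₀⟩ with s; exact ⟨s, rfl⟩
    rw [hs] at h1
    norm_cast at h1
    exact EReal.coe_ne_top _ h1
  obtain ⟨r, hr⟩ : ∃ r : ℝ, f u = r := by
    lift f u to ℝ using ⟨hfu_top, hproper_bot u⟩ with r; exact ⟨r, rfl⟩
  -- subgradient inequality: -C* lam ∈ ∂f(u)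
  have hsub : ∀ y : H,
      f u + ((⟪-(ContinuousLinearMap.adjoint C lam), y - u⟫ : ℝ) : EReal) ≤ f y := by
    intro y
    by_cases hy : f y = ⊤
    · rw [hy]; exact le_top
    obtain ⟨s, hs⟩ : ∃ s : ℝ, f y = s := by
      lift f y to ℝ using ⟨hy, hproper_bot y⟩ with s; exact ⟨s, rfl⟩
    rw [hr, hs]
    norm_cast
    have hadj : ⟪-(ContinuousLinearMap.adjoint C lam), y - u⟫ = -⟪lam, C y - C u⟫ := by
      rw [inner_neg_left, ContinuousLinearMap.adjoint_inner_left, map_sub]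
    rw [hadj]
    have key : r - s ≤ ⟪lam, C y - C u⟫ := by
      set e : G := C y - C u with he
      refine le_of_forall_pos_le_add fun ε hε => ?_
      set t : ℝ := min 1 (2 * ε / (c * (‖e‖ ^ 2 + 1))) with ht
      have hden : 0 < c * (‖e‖ ^ 2 + 1) := by positivity
      have ht0 : 0 < t := lt_min one_pos (by positivity)
      have ht1 : t ≤ 1 := min_le_left _ _
      -- minimality at u + t • (y - u), combined with convexity
      have hcv := hconv u y (1 - t) t (by linarith) (le_of_lt ht0) (by ring)
      have hxt : (1 - t) • u + t • y = u + t • (y - u) := by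
        rw [smul_sub, sub_smul, one_smul]; abel
      rw [hxt, hr, hs] at hcv
      norm_cast at hcv
      have hm := hmin (u + t • (y - u))
      rw [hr] at hm
      have h3 : ((r + (⟪z, C u⟫ + c / 2 * ‖C u - d‖ ^ 2) : ℝ) : EReal) ≤
          ((((1 - t) * r + t * s) + (⟪z, C (u + t • (y - u))⟫ +
            c / 2 * ‖C (u + t • (y - u)) - d‖ ^ 2) : ℝ) : EReal) := by
        rw [EReal.coe_add, EReal.coe_add]
        exact le_trans hm (by rw [EReal.coe_add ((1 - t) * r + t * s)]; exact add_le_add_left hcv _)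
      have hreal : r + (⟪z, C u⟫ + c / 2 * ‖C u - d‖ ^ 2) ≤
          ((1 - t) * r + t * s) + (⟪z, C (u + t • (y - u))⟫ +
            c / 2 * ‖C (u + t • (y - u)) - d‖ ^ 2) := by exact_mod_cast h3
      have hCxt : C (u + t • (y - u)) = C u + t • e := by
        rw [map_add, map_smul, he, map_sub]
      have hsplit : C u + t • e - d = (C u - d) + t • e := by abel
      have hnorm : ‖(C u - d) + t • e‖ ^ 2 =
          ‖C u - d‖ ^ 2 + 2 * (t * ⟪C u - d, e⟫) + t ^ 2 * ‖e‖ ^ 2 := by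
        rw [norm_add_sq_real, real_inner_smul_right, norm_smul, mul_pow,
          Real.norm_eq_abs, sq_abs]
      have hinz : ⟪z, C u + t • e⟫ = ⟪z, C u⟫ + t * ⟪z, e⟫ := by
        rw [inner_add_right, real_inner_smul_right]
      rw [hCxt, hsplit, hnorm, hinz] at hreal
      have h4 : t * (r - s - ⟪z, e⟫ - c * ⟪C u - d, e⟫ - c * t / 2 * ‖e‖ ^ 2) ≤ 0 := by
        nlinarith [hreal]
      have hdiv : r - s ≤ ⟪z, e⟫ + c * ⟪C u - d, e⟫ + c * t / 2 * ‖e‖ ^ 2 := by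
        nlinarith [h4, ht0]
      have hlam_e : ⟪lam, e⟫ = ⟪z, e⟫ + c * ⟪C u - d, e⟫ := by
        rw [hlam, inner_add_left, real_inner_smul_left]
      have htsmall : c * t / 2 * ‖e‖ ^ 2 ≤ ε := by
        have ht2 : t ≤ 2 * ε / (c * (‖e‖ ^ 2 + 1)) := min_le_right _ _
        rw [le_div_iff₀ hden] at ht2
        have hp : 0 < t * c := mul_pos ht0 hc
        nlinarith [ht2, hp]
      rw [hlam_e]
      linarith
    linarith
  refine ⟨u, mem_subdiff_conj f hproper_bot u _ r hr hsub, ?_⟩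
  rw [hlam]
  rw [smul_add, smul_neg, smul_sub]
  abel
end
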